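/- The probability mass function of the sum S of n i.i.d. uniform random variables on {1,...,m} is log-concave and unimodal: Pr(S = t)² ≥ Pr(S = t-1)·Pr(S = t+1) for all t, and Pr(S = t) is nondecreasing for t ≤ n(m+1)/2 and nonincreasing for t ≥ n(m+1)/2. -/

import Mathlib

open Finset

def cnt (n m : ℕ) (t : ℤ) : ℕ :=
  (Finset.univ.filter
    (fun ω : Fin n → Fin m => (∑ i : Fin n, ((ω i : ℕ) + 1 : ℤ)) = t)).card

lemma cnt_zero (m : ℕ) (t : ℤ) : cnt 0 m t = if t = 0 then 1 else 0 := by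
  unfold cnt
  rcases eq_or_ne t 0 with h | h <;> simp [h, eq_comm]

lemma cnt_rec (n m : ℕ) (t : ℤ) :
    cnt (n+1) m t = ∑ k ∈ Finset.Icc (1:ℤ) m, cnt n m (t - k) := by
  unfold cnt
  rw [Finset.card_eq_sum_card_fiberwise
    (f := fun ω : Fin (n+1) → Fin m => ((ω 0 : ℕ) + 1 : ℤ)) (t := Finset.Icc (1:ℤ) m)
    (by intro ω _; simp [Finset.mem_Icc])]
  refine Finset.sum_congr rfl ?_
  intro k hk
  rw [Finset.mem_Icc] at hk
  have hm : 0 < m := by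
    by_contra h
    have : (k:ℤ) ≤ 0 := by omega
    omega
  set a : Fin m := ⟨(k-1).toNat, by omega⟩ with ha
  have hav : ((a : ℕ) : ℤ) + 1 = k := by simp [ha]; omega
  apply Finset.card_nbij' (i := fun ω => Fin.tail ω) (j := fun σ => Fin.cons a σ)
  · intro ω hω
    simp only [Finset.mem_coe, Finset.mem_filter, Finset.mem_univ, true_and] at hω ⊢
    obtain ⟨h1, h2⟩ := hω
    rw [Fin.sum_univ_succ] at h1
    have : (ω 0 : ℤ) = (a : ℤ) := by omega
    simp only [Fin.tail]
    omega
  · intro σ hσ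
    simp only [Finset.mem_coe, Finset.mem_filter, Finset.mem_univ, true_and] at hσ ⊢
    constructor
    · rw [Fin.sum_univ_succ]
      simp only [Fin.cons_zero, Fin.cons_succ]
      omega
    · simp only [Fin.cons_zero]; exact hav
  · intro ω hω
    simp only [Finset.mem_coe, Finset.mem_filter, Finset.mem_univ, true_and] at hω
    have h0 : ω 0 = a := by
      apply Fin.ext
      have := hω.2
      omega
    conv_rhs => rw [← Fin.cons_self_tail ω, h0]
  · intro σ _; simp [Fin.tail]

lemma cnt_symm (n m : ℕ) (t : ℤ) : cnt n m t = cnt n m (n * (m + 1) - t) := by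
  unfold cnt
  apply Finset.card_nbij' (i := fun ω i => (ω i).rev) (j := fun ω i => (ω i).rev)
  · intro ω hω
    simp only [Finset.mem_coe, Finset.mem_filter, Finset.mem_univ, true_and] at hω ⊢
    have key : ∀ i : Fin n, (((ω i).rev : ℕ) + 1 : ℤ) = (m + 1) - ((ω i : ℕ) + 1) := by
      intro i
      have h1 : ((ω i).rev : ℕ) = m - ((ω i : ℕ) + 1) := Fin.val_rev _
      have h2 : (ω i : ℕ) < m := (ω i).isLt
      omega
    rw [Finset.sum_congr rfl (fun i _ => key i), Finset.sum_sub_distrib, hω,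
      Finset.sum_const, Finset.card_univ, Fintype.card_fin]
    push_cast
    ring
  · intro ω hω
    simp only [Finset.mem_coe, Finset.mem_filter, Finset.mem_univ, true_and] at hω ⊢
    have key : ∀ i : Fin n, (((ω i).rev : ℕ) + 1 : ℤ) = (m + 1) - ((ω i : ℕ) + 1) := by
      intro i
      have h1 : ((ω i).rev : ℕ) = m - ((ω i : ℕ) + 1) := Fin.val_rev _
      have h2 : (ω i : ℕ) < m := (ω i).isLt
      omega
    rw [Finset.sum_congr rfl (fun i _ => key i), Finset.sum_sub_distrib, hω,
      Finset.sum_const, Finset.card_univ, Fintype.card_fin]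
    push_cast
    ring
  · intro ω _; funext i; simp
  · intro ω _; funext i; simp


/-- Strong log-concavity (TP₂) of a sequence. -/
def SLC (a : ℤ → ℝ) : Prop := ∀ s t : ℤ, s ≤ t → a (s-1) * a (t+1) ≤ a s * a t

/-- Multistep strong log-concavity. -/
lemma slc_steps {a : ℤ → ℝ} (h : SLC a) :
    ∀ (d : ℕ) (x y : ℤ), x ≤ y → a (x - d) * a (y + d) ≤ a x * a y := by
  intro d
  induction d with
  | zero => intro x y _; simp
  | succ d ih =>
    intro x y hxy
    have h1 : a ((x-1) - d) * a ((y+1) + d) ≤ a (x-1) * a (y+1) := ih (x-1) (y+1) (by omega)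
    have h2 : a (x-1) * a (y+1) ≤ a x * a y := h x y hxy
    have e1 : (x - 1) - (d:ℤ) = x - ((d:ℕ)+1 : ℕ) := by push_cast; ring
    have e2 : (y + 1) + (d:ℤ) = y + ((d:ℕ)+1 : ℕ) := by push_cast; ring
    rw [e1, e2] at h1
    linarith

lemma lagrange_ineq (S : Finset ℤ) (f g F G : ℤ → ℝ)
    (h : ∀ k ∈ S, ∀ l ∈ S,
      0 ≤ (f k * g l - f l * g k) * (F k * G l - F l * G k)) :
    (∑ k ∈ S, g k * F k) * (∑ k ∈ S, f k * G k) ≤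
      (∑ k ∈ S, f k * F k) * (∑ k ∈ S, g k * G k) := by
  have key : (0:ℝ) ≤ ∑ k ∈ S, ∑ l ∈ S,
      (f k * g l - f l * g k) * (F k * G l - F l * G k) :=
    Finset.sum_nonneg fun k hk => Finset.sum_nonneg fun l hl => h k hk l hl
  have expand : ∑ k ∈ S, ∑ l ∈ S,
      (f k * g l - f l * g k) * (F k * G l - F l * G k) =
      2 * ((∑ k ∈ S, f k * F k) * (∑ k ∈ S, g k * G k)
        - (∑ k ∈ S, g k * F k) * (∑ k ∈ S, f k * G k)) := by
    have e1 : ∀ k, ∑ l ∈ S, (f k * g l - f l * g k) * (F k * G l - F l * G k) =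
        (f k * F k) * (∑ l ∈ S, g l * G l) + (g k * G k) * (∑ l ∈ S, f l * F l)
        - (f k * G k) * (∑ l ∈ S, g l * F l) - (g k * F k) * (∑ l ∈ S, f l * G l) := by
      intro k
      rw [Finset.sum_congr rfl (g := fun l =>
        (f k * F k) * (g l * G l) + (g k * G k) * (f l * F l)
        - (f k * G k) * (g l * F l) - (g k * F k) * (f l * G l))
        (fun l _ => by ring)]
      simp only [Finset.sum_sub_distrib, Finset.sum_add_distrib, ← Finset.mul_sum]
    rw [Finset.sum_congr rfl fun k _ => e1 k]
    simp only [Finset.sum_sub_distrib, Finset.sum_add_distrib, ← Finset.sum_mul]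
    ring
  rw [expand] at key
  linarith

/-- The indicator of `[1,m]`. -/
noncomputable def chi (m : ℕ) : ℤ → ℝ := fun k => if 1 ≤ k ∧ k ≤ (m:ℤ) then 1 else 0

lemma chi_minor_nonneg (m : ℕ) {k l : ℤ} (hkl : k < l) :
    0 ≤ chi m k * chi m (l-1) - chi m l * chi m (k-1) := by
  unfold chi
  split_ifs <;> norm_num <;> omega

lemma conv0 (a : ℤ → ℝ) (m : ℕ) (x : ℤ) :
    ∑ k ∈ Finset.Icc (1:ℤ) (m+1), chi m k * a (x - k)
      = ∑ k ∈ Finset.Icc (1:ℤ) m, a (x - k) := by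
  rw [show Finset.Icc (1:ℤ) (m+1) = insert ((m:ℤ)+1) (Finset.Icc (1:ℤ) m) from by
    ext k; simp [Finset.mem_Icc]; omega]
  rw [Finset.sum_insert (by simp [Finset.mem_Icc])]
  rw [show chi m ((m:ℤ)+1) = 0 from by unfold chi; rw [if_neg (by omega)]]
  rw [zero_mul, zero_add]
  refine Finset.sum_congr rfl fun k hk => ?_
  rw [Finset.mem_Icc] at hk
  unfold chi
  rw [if_pos (by omega), one_mul]

lemma conv1 (a : ℤ → ℝ) (m : ℕ) (x : ℤ) :
    ∑ k ∈ Finset.Icc (1:ℤ) (m+1), chi m (k-1) * a (x - k)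
      = ∑ k ∈ Finset.Icc (1:ℤ) m, a (x - 1 - k) := by
  rw [show Finset.Icc (1:ℤ) (m+1) = insert 1 (Finset.Icc (2:ℤ) (m+1)) from by
    ext k; simp [Finset.mem_Icc]; omega]
  rw [Finset.sum_insert (by simp [Finset.mem_Icc])]
  rw [show chi m ((1:ℤ)-1) = 0 from by unfold chi; rw [if_neg (by omega)]]
  rw [zero_mul, zero_add]
  apply Finset.sum_nbij' (i := fun k => k - 1) (j := fun k => k + 1)
  · intro k hk; simp only [Finset.mem_Icc] at hk ⊢; omega
  · intro k hk; simp only [Finset.mem_Icc] at hk ⊢; omega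
  · intro k _; ring
  · intro k _; ring
  · intro k hk
    rw [Finset.mem_Icc] at hk
    unfold chi
    rw [if_pos (by omega), one_mul]
    ring_nf

/-- TP₂ is preserved by summing over a sliding window of length `m`. -/
lemma slc_window {a : ℤ → ℝ} (m : ℕ) (h : SLC a) :
    SLC (fun t => ∑ k ∈ Finset.Icc (1:ℤ) m, a (t - k)) := by
  intro s t hst
  simp only
  have H := lagrange_ineq (Finset.Icc (1:ℤ) (m+1)) (chi m) (fun k => chi m (k-1))
    (fun k => a (s - k)) (fun k => a (t + 1 - k)) ?_
  · rw [conv0, conv1, conv0, conv1] at H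
    calc (∑ k ∈ Finset.Icc (1:ℤ) m, a (s - 1 - k)) * ∑ k ∈ Finset.Icc (1:ℤ) m, a (t + 1 - k)
        ≤ (∑ k ∈ Finset.Icc (1:ℤ) m, a (s - k)) * ∑ k ∈ Finset.Icc (1:ℤ) m, a (t + 1 - 1 - k) := H
      _ = _ := by
          congr 1
          exact Finset.sum_congr rfl fun k _ => by ring_nf
  · -- the minor positivity
    have main : ∀ k l : ℤ, k < l →
        0 ≤ (chi m k * chi m (l-1) - chi m l * chi m (k-1))
          * (a (s-k) * a (t+1-l) - a (s-l) * a (t+1-k)) := by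
      intro k l hkl
      apply mul_nonneg (chi_minor_nonneg m hkl)
      have second : a (s-l) * a (t+1-k) ≤ a (s-k) * a (t+1-l) := by
        rcases le_or_gt (s - k) (t + 1 - l) with hc | hc
        · have := slc_steps h (l - k).toNat (s-k) (t+1-l) hc
          rw [show (s-k) - ((l-k).toNat : ℤ) = s - l from by omega,
            show (t+1-l) + ((l-k).toNat : ℤ) = t+1-k from by omega] at this
          exact this
        · have := slc_steps h (t+1-s).toNat (t+1-l) (s-k) (le_of_lt hc)
          rw [show (t+1-l) - ((t+1-s).toNat : ℤ) = s - l from by omega,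
            show (s-k) + ((t+1-s).toNat : ℤ) = t+1-k from by omega] at this
          linarith [this]
      linarith
    intro k _ l _
    rcases lt_trichotomy k l with hkl | hkl | hkl
    · exact main k l hkl
    · subst hkl; ring_nf; simp
    · have := main l k hkl
      calc (0:ℝ) ≤ _ := this
        _ = _ := by ring


lemma cnt_slc (n m : ℕ) : SLC (fun t => (cnt n m t : ℝ)) := by
  induction n with
  | zero =>
    intro s t hst
    simp only [cnt_zero]
    split_ifs <;> norm_num <;> omega
  | succ n ih =>
    have e : (fun t => (cnt (n+1) m t : ℝ))
        = fun t => ∑ k ∈ Finset.Icc (1:ℤ) m, (cnt n m (t - k) : ℝ) := by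
      funext t
      rw [cnt_rec]
      push_cast
      rfl
    rw [e]
    exact slc_window m ih

lemma cnt_step (n m : ℕ) {t : ℤ} (ht : 2*t ≤ n*(m+1)) :
    cnt n m (t-1) ≤ cnt n m t := by
  have h := cnt_slc n m t ((n:ℤ)*(m+1) - t) (by omega)
  simp only at h
  have e1 : cnt n m ((n:ℤ)*(m+1) - t + 1) = cnt n m (t - 1) := by
    rw [cnt_symm n m ((n:ℤ)*(m+1) - t + 1)]
    congr 1
    push_cast
    ring
  have e2 : cnt n m ((n:ℤ)*(m+1) - t) = cnt n m t := by
    rw [cnt_symm n m ((n:ℤ)*(m+1) - t)]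
    congr 1
    push_cast
    ring
  rw [e1, e2] at h
  have hx : (0:ℝ) ≤ (cnt n m (t-1) : ℝ) := Nat.cast_nonneg _
  have hy : (0:ℝ) ≤ (cnt n m t : ℝ) := Nat.cast_nonneg _
  have : (cnt n m (t-1) : ℝ) ≤ (cnt n m t : ℝ) := by nlinarith
  exact_mod_cast this

lemma cnt_mono (n m : ℕ) : ∀ (d : ℕ) (t : ℤ), 2*t ≤ n*(m+1) →
    cnt n m (t - d) ≤ cnt n m t := by
  intro d
  induction d with
  | zero => intro t _; simp
  | succ d ih =>
    intro t ht
    calc cnt n m (t - ((d:ℕ)+1:ℕ)) = cnt n m ((t-1) - d) := by congr 1; push_cast; ring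
      _ ≤ cnt n m (t-1) := ih (t-1) (by omega)
      _ ≤ cnt n m t := cnt_step n m ht

/-- The PMF of the rank sum `S` of `n` i.i.d. uniform variables on `{1,...,m}` is
log-concave and unimodal: `Pr(S=t)² ≥ Pr(S=t-1)·Pr(S=t+1)` for all `t`, `Pr(S=t)` is
nondecreasing for `t ≤ n(m+1)/2` and nonincreasing for `t ≥ n(m+1)/2`. -/
theorem rank_sum_log_concave_unimodal (n m : ℕ) (hn : 0 < n) (hm : 0 < m)
    (pmf : ℤ → ℝ)
    (hpmf : ∀ t : ℤ, pmf t =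
      ((Finset.univ.filter
          (fun ω : Fin n → Fin m => (∑ i : Fin n, ((ω i : ℕ) + 1 : ℤ)) = t)).card : ℝ) /
        (m ^ n : ℝ)) :
    (∀ t : ℤ, pmf (t - 1) * pmf (t + 1) ≤ pmf t ^ 2) ∧
    (∀ s t : ℤ, s ≤ t → (t : ℝ) ≤ n * (m + 1) / 2 → pmf s ≤ pmf t) ∧
    (∀ s t : ℤ, s ≤ t → n * ((m : ℝ) + 1) / 2 ≤ (s : ℝ) → pmf t ≤ pmf s) := by
  have hpmf' : ∀ t : ℤ, pmf t = (cnt n m t : ℝ) / (m^n : ℝ) := hpmf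
  have hc : (0:ℝ) < (m:ℝ)^n := by positivity
  have hmono : ∀ s t : ℤ, s ≤ t → 2*t ≤ n*(m+1) → pmf s ≤ pmf t := by
    intro s t hst ht
    rw [hpmf' s, hpmf' t]
    gcongr
    have := cnt_mono n m (t-s).toNat t ht
    rw [show t - ((t-s).toNat : ℤ) = s from by omega] at this
    exact_mod_cast this
  refine ⟨?_, ?_, ?_⟩
  · intro t
    rw [hpmf' (t-1), hpmf' (t+1), hpmf' t, div_mul_div_comm, div_pow, sq, sq]
    gcongr ?_ / ?_
    · have := cnt_slc n m t t le_rfl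
      simp only at this
      exact_mod_cast this
  · intro s t hst ht
    apply hmono s t hst
    have : 2*(t:ℝ) ≤ n*(m+1) := by linarith
    exact_mod_cast this
  · intro s t hst hs
    have hs' : (n:ℤ)*(m+1) ≤ 2*s := by
      have : (n:ℝ)*(m+1) ≤ 2*s := by linarith
      exact_mod_cast this
    have e1 : pmf t = pmf ((n:ℤ)*(m+1) - t) := by
      rw [hpmf', hpmf', cnt_symm n m t]
    have e2 : pmf s = pmf ((n:ℤ)*(m+1) - s) := by
      rw [hpmf', hpmf', cnt_symm n m s]
    rw [e1, e2]
    exact hmono _ _ (by omega) (by omega)
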